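/- Let A ⊆ x₀/y₀::R and x++A¹ = y++A². Then there exists B ⊆ P (P as in the MPCP-to-PCP reduction) such that (#x)++B¹ = #::(y#)++B². -/

import Mathlib

abbrev Card := List ℕ × List ℕ

def tau1 : List Card → List ℕ
  | [] => []
  | c :: A => c.1 ++ tau1 A

def tau2 : List Card → List ℕ
  | [] => []
  | c :: A => c.2 ++ tau2 A

inductive Rew (R : List Card) : List ℕ → List ℕ → Prop
  | step (u v l r : List ℕ) : (l, r) ∈ R → Rew R (u ++ l ++ v) (u ++ r ++ v)

def Rewt (R : List Card) : List ℕ → List ℕ → Prop :=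
  Relation.ReflTransGen (Rew R)

def hashL (h : ℕ) : List ℕ → List ℕ
  | [] => []
  | a :: x => h :: a :: hashL h x

def hashR (h : ℕ) : List ℕ → List ℕ
  | [] => []
  | a :: x => a :: h :: hashR h x

lemma hashL_append (h : ℕ) (u v : List ℕ) : hashL h (u ++ v) = hashL h u ++ hashL h v := by
  induction u with
  | nil => rfl
  | cons a u ih => simp [hashL, ih]

lemma hashR_append (h : ℕ) (u v : List ℕ) : hashR h (u ++ v) = hashR h u ++ hashR h v := by
  induction u with
  | nil => rfl
  | cons a u ih => simp [hashR, ih]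

lemma hashL_hsh (h : ℕ) (z : List ℕ) : hashL h z ++ [h] = h :: hashR h z := by
  induction z with
  | nil => rfl
  | cons a z ih => simp [hashL, hashR, ih]

lemma tau1_append (A B : List Card) : tau1 (A ++ B) = tau1 A ++ tau1 B := by
  induction A with
  | nil => rfl
  | cons c A ih => simp [tau1, ih]

lemma tau2_append (A B : List Card) : tau2 (A ++ B) = tau2 A ++ tau2 B := by
  induction A with
  | nil => rfl
  | cons c A ih => simp [tau2, ih]

lemma tau1_map (h : ℕ) (A : List Card) :
    tau1 (A.map (fun c => (hashL h c.1, hashR h c.2))) = hashL h (tau1 A) := by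
  induction A with
  | nil => rfl
  | cons c A ih => simp [tau1, ih, hashL_append]

lemma tau2_map (h : ℕ) (A : List Card) :
    tau2 (A.map (fun c => (hashL h c.1, hashR h c.2))) = hashR h (tau2 A) := by
  induction A with
  | nil => rfl
  | cons c A ih => simp [tau2, ih, hashR_append]

lemma tau1_filter (A : List Card) :
    tau1 (A.filter (fun c => c ≠ (([] : List ℕ), ([] : List ℕ)))) = tau1 A := by
  induction A with
  | nil => rfl
  | cons c A ih =>
    by_cases hc : c = (([] : List ℕ), ([] : List ℕ))
    · subst hc; simpa [List.filter, tau1] using ih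
    · rw [List.filter_cons_of_pos (by simp [hc])]; simp only [ne_eq, decide_not] at ih ⊢; simp [tau1, ih]

lemma tau2_filter (A : List Card) :
    tau2 (A.filter (fun c => c ≠ (([] : List ℕ), ([] : List ℕ)))) = tau2 A := by
  induction A with
  | nil => rfl
  | cons c A ih =>
    by_cases hc : c = (([] : List ℕ), ([] : List ℕ))
    · subst hc; simpa [List.filter, tau2] using ih
    · rw [List.filter_cons_of_pos (by simp [hc])]; simp only [ne_eq, decide_not] at ih ⊢; simp [tau2, ih]

theorem MPCP_PCP_trans1 (x₀ y₀ : List ℕ) (R : List Card) (Sig : List ℕ) (dol hsh : ℕ)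
    (hR : ∀ c ∈ ((x₀, y₀) :: R), c.1 ⊆ Sig ∧ c.2 ⊆ Sig)
    (hd : dol ∉ Sig) (hh : hsh ∉ Sig) (hne : dol ≠ hsh)
    (d e : Card) (P : List Card)
    (hdd : d = (dol :: hashL hsh x₀, dol :: hsh :: hashR hsh y₀))
    (hee : e = ([hsh, dol], [dol]))
    (hP : P = [d, e] ++
      ((((x₀, y₀) :: R).filter (fun c => c ≠ (([] : List ℕ), ([] : List ℕ)))).map
        (fun c => (hashL hsh c.1, hashR hsh c.2))))
    (A : List Card) (hA : A ⊆ (x₀, y₀) :: R)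
    (x y : List ℕ) (htau : x ++ tau1 A = y ++ tau2 A) :
    ∃ B : List Card, B ⊆ P ∧
      hashL hsh x ++ tau1 B = hsh :: (hashR hsh y ++ tau2 B) := by
  refine ⟨(A.filter (fun c => c ≠ (([] : List ℕ), ([] : List ℕ)))).map
      (fun c => (hashL hsh c.1, hashR hsh c.2)) ++ [e], ?_, ?_⟩
  · intro b hb
    rcases List.mem_append.1 hb with hb | hb
    · rcases List.mem_map.1 hb with ⟨c, hc, rfl⟩
      subst hP
      refine List.mem_append.2 (Or.inr (List.mem_map.2 ⟨c, ?_, rfl⟩))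
      rcases List.mem_filter.1 hc with ⟨hc1, hc2⟩
      exact List.mem_filter.2 ⟨hA hc1, hc2⟩
    · simp at hb
      subst hP hb
      simp
  · subst hee
    rw [tau1_append, tau2_append, tau1_map, tau2_map, tau1_filter, tau2_filter]
    show hashL hsh x ++ (hashL hsh (tau1 A) ++ ([hsh, dol] ++ tau1 []))
        = hsh :: (hashR hsh y ++ (hashR hsh (tau2 A) ++ ([dol] ++ tau2 [])))
    simp only [tau1, tau2, List.append_nil]
    have key : hashL hsh x ++ hashL hsh (tau1 A) ++ [hsh]
        = hsh :: (hashR hsh y ++ hashR hsh (tau2 A)) := by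
      rw [← hashL_append, ← hashR_append, ← htau, hashL_hsh]
    rw [show [hsh, dol] = [hsh] ++ [dol] from rfl]
    simp only [← List.append_assoc]
    rw [key]
    simp
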